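/- Let B be a unital C*-algebra, let A be a unital pro-C*-algebra, and let φ : B → A be a unital *-algebra homomorphism (no continuity assumed). Then p(φ(b)) ≤ ‖b‖ for every b ∈ B and every continuous C*-seminorm p on A; in particular φ takes values in the C*-algebra A_b of bounded elements and ‖φ(b)‖_∞ ≤ ‖b‖ for all b ∈ B, so φ factors (uniquely) through the inclusion A_b ↪ A. (This expresses that (−)_b is a coreflector from pro-C*-algebras to C*-algebras.) -/

import Mathlib

open scoped ENNReal

def IsCStarSeminorm {A : Type*} [Ring A] [StarRing A] [Algebra ℂ A] (p : A → ℝ) : Prop :=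
  (∀ a, 0 ≤ p a) ∧ (∀ a b, p (a + b) ≤ p a + p b) ∧
    (∀ (c : ℂ) (a : A), p (c • a) = ‖c‖ * p a) ∧
    (∀ a b, p (a * b) ≤ p a * p b) ∧ (∀ a, p (star a * a) = p a ^ 2)

def contCStarSeminorms (A : Type*) [TopologicalSpace A] [Ring A] [StarRing A] [Algebra ℂ A] :
    Set (A → ℝ) :=
  {p | IsCStarSeminorm p ∧ Continuous p}

class ProCStarAlgebra (A : Type*) [UniformSpace A] [Ring A] [StarRing A] [Algebra ℂ A] :
    Prop where
  t2 : T2Space A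
  complete : CompleteSpace A
  topologicalRing : IsTopologicalRing A
  continuousStar : ContinuousStar A
  uniformAddGroup : IsUniformAddGroup A
  mem_nhds_zero : ∀ s : Set A, s ∈ nhds (0 : A) ↔
    ∃ p ∈ contCStarSeminorms A, ∃ ε : ℝ, 0 < ε ∧ {a : A | p a < ε} ⊆ s

noncomputable def uniformNorm (A : Type*) [UniformSpace A] [Ring A] [StarRing A] [Algebra ℂ A]
    (a : A) : ℝ≥0∞ :=
  ⨆ p ∈ contCStarSeminorms A, ENNReal.ofReal (p a)

def boundedElems (A : Type*) [UniformSpace A] [Ring A] [StarRing A] [Algebra ℂ A] : Set A :=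
  {a | uniformNorm A a < ⊤}

def expSet (A : Type*) [UniformSpace A] [Ring A] [StarRing A] [Algebra ℂ A] : Set A :=
  {w | ∃ (n : ℕ) (a e : Fin n → A),
    (∀ j, star (a j) = a j) ∧
    (∀ j, HasSum (fun k : ℕ => ((Complex.I ^ k / (k.factorial : ℂ)) • a j ^ k)) (e j)) ∧
    w = (List.ofFn e).prod}

section Key

/-- A bundled C*-seminorm-like object on a ring `B` (without the C*-identity,
which we pass separately). -/
structure CSemi (B : Type*) [Ring B] [Algebra ℂ B] where
  q : B → ℝ
  nonneg : ∀ a, 0 ≤ q a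
  add_le' : ∀ a b, q (a + b) ≤ q a + q b
  smul' : ∀ (c : ℂ) (a : B), q (c • a) = ‖c‖ * q a
  mul_le' : ∀ a b, q (a * b) ≤ q a * q b

variable {B : Type*} [Ring B] [Algebra ℂ B]

theorem CSemi.q_zero (s : CSemi B) : s.q 0 = 0 := by
  have := s.smul' 0 0
  simpa using this

theorem CSemi.q_neg (s : CSemi B) (a : B) : s.q (-a) = s.q a := by
  have := s.smul' (-1) a
  simpa using this

/-- Type synonym of `B` carrying the seminorm `s.q`. -/
def QT (s : CSemi B) : Type _ := B

instance (s : CSemi B) : Ring (QT s) := inferInstanceAs (Ring B)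
instance (s : CSemi B) : Algebra ℂ (QT s) := inferInstanceAs (Algebra ℂ B)

noncomputable instance (s : CSemi B) : SeminormedAddCommGroup (QT s) :=
  AddGroupSeminorm.toSeminormedAddCommGroup
    { toFun := s.q
      map_zero' := s.q_zero
      add_le' := s.add_le'
      neg' := s.q_neg }

noncomputable instance (s : CSemi B) : SeminormedRing (QT s) :=
  { (inferInstance : SeminormedAddCommGroup (QT s)),
    (inferInstance : Ring (QT s)) with
    norm_mul_le := s.mul_le' }

noncomputable instance (s : CSemi B) : NormedAlgebra ℂ (QT s) :=
  { (inferInstance : Algebra ℂ (QT s)) with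
    norm_smul_le := fun c a => le_of_eq (s.smul' c a) }

noncomputable instance (s : CSemi B) :
    NormedAlgebra ℂ (UniformSpace.Completion (QT s)) :=
  { (inferInstance : Algebra ℂ (UniformSpace.Completion (QT s))) with
    norm_smul_le := norm_smul_le }

/-- The canonical algebra homomorphism from `B` into the completion of `B`
with respect to the seminorm `s.q`. -/
noncomputable def psi (s : CSemi B) : QT s →ₐ[ℂ] UniformSpace.Completion (QT s) :=
  { UniformSpace.Completion.coeRingHom (α := QT s) with
    commutes' := fun c => (UniformSpace.Completion.algebraMap_def (QT s) ℂ c).symm }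

theorem norm_psi (s : CSemi B) (x : QT s) : ‖psi s x‖ = s.q x :=
  UniformSpace.Completion.norm_coe x

end Key

open Filter in
theorem CSemi.le_norm {B : Type*} [NormedRing B] [StarRing B] [CStarRing B]
    [NormedAlgebra ℂ B] [CompleteSpace B] (s : CSemi B)
    (hsq : ∀ a, s.q (star a * a) = s.q a ^ 2) (b : B) :
    s.q b ≤ ‖b‖ := by
  rcases subsingleton_or_nontrivial B with hB | hB
  · have hb : b = 0 := Subsingleton.elim _ _
    simp [hb, s.q_zero]
  set m := star b * b with hm_def
  have hmsa : star m = m := by simp [hm_def, star_mul]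
  have hpow : ∀ k : ℕ, s.q (m ^ 2 ^ k) = s.q m ^ 2 ^ k := by
    intro k
    induction k with
    | zero => simp
    | succ k ih =>
      have h1 : m ^ 2 ^ (k + 1) = star (m ^ 2 ^ k) * m ^ 2 ^ k := by
        rw [star_pow, hmsa, ← pow_add, pow_succ]; ring_nf
      rw [h1, hsq, ih, ← pow_mul, ← pow_succ]
  have key : s.q m ≤ ‖m‖ := by
    set ψ := psi s with hψ
    have hG := spectrum.pow_nnnorm_pow_one_div_tendsto_nhds_spectralRadius (ψ m)
    have h2 : Tendsto (fun k : ℕ => 2 ^ k) atTop atTop :=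
      tendsto_pow_atTop_atTop_of_one_lt one_lt_two
    have hcomp := hG.comp h2
    have hcomp' : Tendsto (fun _ : ℕ => ENNReal.ofReal (s.q m)) atTop
        (nhds (spectralRadius ℂ (ψ m))) := by
      convert hcomp using 1
      funext k
      have hn : ‖ψ m ^ 2 ^ k‖ = s.q m ^ 2 ^ k := by
        rw [← map_pow ψ (show QT s from m), norm_psi]; exact hpow k
      have hnn : (‖ψ m ^ 2 ^ k‖₊ : ℝ≥0∞) = ENNReal.ofReal (s.q m) ^ 2 ^ k := by
        rw [← (show ENNReal.ofReal ‖ψ m ^ 2 ^ k‖ = (‖ψ m ^ 2 ^ k‖₊ : ℝ≥0∞) from ofReal_norm _), hn, ENNReal.ofReal_pow (s.nonneg m)]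
      have hne : ((2 ^ k : ℕ) : ℝ) ≠ 0 := by positivity
      simp only [Function.comp]
      rw [hnn, ← ENNReal.rpow_natCast (ENNReal.ofReal (s.q m)) (2 ^ k),
        ← ENNReal.rpow_mul, mul_one_div, div_self hne, ENNReal.rpow_one]
    have hρ : spectralRadius ℂ (ψ m) = ENNReal.ofReal (s.q m) :=
      tendsto_nhds_unique hcomp' tendsto_const_nhds
    have hsubset : spectrum ℂ (ψ m) ⊆ spectrum ℂ m := AlgHom.spectrum_apply_subset ψ m
    have hle : spectralRadius ℂ (ψ m) ≤ spectralRadius ℂ m := by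
      show (⨆ z ∈ spectrum ℂ (ψ m), (‖z‖₊ : ℝ≥0∞)) ≤ spectralRadius ℂ m
      exact iSup₂_le fun z hz => le_iSup₂_of_le z (hsubset hz) le_rfl
    have hfin : spectralRadius ℂ m ≤ (‖m‖₊ : ℝ≥0∞) := spectrum.spectralRadius_le_nnnorm m
    have : ENNReal.ofReal (s.q m) ≤ ENNReal.ofReal ‖m‖ := by
      rw [← hρ, (ofReal_norm m : ENNReal.ofReal ‖m‖ = (‖m‖₊ : ℝ≥0∞))]
      exact hle.trans hfin
    exact (ENNReal.ofReal_le_ofReal_iff (norm_nonneg m)).mp this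
  have h3 : s.q b ^ 2 ≤ ‖b‖ * ‖b‖ := by
    rw [← hsq b]
    exact key.trans_eq CStarRing.norm_star_mul_self
  nlinarith [s.nonneg b, norm_nonneg b]

/-- If `B` is a unital C*-algebra, `A` a unital pro-C*-algebra, and
`φ : B → A` a (not necessarily continuous) unital *-algebra homomorphism, then
`p (φ b) ≤ ‖b‖` for every continuous C*-seminorm `p` on `A`; in particular
`‖φ b‖_∞ ≤ ‖b‖`, so `φ` takes values in `A_b` and factors through the inclusion
`A_b ↪ A`.  (This expresses that `(-)_b` is a coreflector.) -/
theorem stmt6 {B A : Type*}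
    [NormedRing B] [StarRing B] [CStarRing B] [NormedAlgebra ℂ B] [CompleteSpace B]
    [UniformSpace A] [Ring A] [StarRing A] [Algebra ℂ A] [ProCStarAlgebra A]
    (φ : B →⋆ₐ[ℂ] A) :
    (∀ p ∈ contCStarSeminorms A, ∀ b : B, p (φ b) ≤ ‖b‖) ∧
    (∀ b : B, uniformNorm A (φ b) ≤ ENNReal.ofReal ‖b‖) ∧
    Set.range φ ⊆ boundedElems A := by
  have H1 : ∀ p ∈ contCStarSeminorms A, ∀ b : B, p (φ b) ≤ ‖b‖ := by
    intro p hp b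
    obtain ⟨⟨hnn, hadd, hsmul, hmul, hstar⟩, hcont⟩ := hp
    let s : CSemi B :=
      { q := fun x => p (φ x)
        nonneg := fun a => hnn _
        add_le' := fun a c => by simp only [map_add]; exact hadd _ _
        smul' := fun c a => by simp only [map_smul]; exact hsmul _ _
        mul_le' := fun a c => by simp only [map_mul]; exact hmul _ _ }
    exact s.le_norm (fun a => by
      show p (φ (star a * a)) = p (φ a) ^ 2
      rw [map_mul, map_star]; exact hstar _) b
  have H2 : ∀ b : B, uniformNorm A (φ b) ≤ ENNReal.ofReal ‖b‖ := fun b =>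
    iSup₂_le fun p hp => ENNReal.ofReal_le_ofReal (H1 p hp b)
  refine ⟨H1, H2, ?_⟩
  rintro x ⟨b, rfl⟩
  exact lt_of_le_of_lt (H2 b) ENNReal.ofReal_lt_top
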